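/- arXiv:2202.06321 — 2 statements merged into one kernel-verified Lean document; each statement's English description precedes it below -/
import Mathlib

section
/- Let $U^+,U^-\subset\mathbb{R}^{n+1}$ be bounded measurable sets with positive measure, $0<q\le 1$, and $f\in L^q(U^+\cup U^-)$. Then there exists a constant $c_0\in\mathbb{R}$ attaining the infimum $\inf_{c\in\mathbb{R}}\left(\Xint-_{U^+}(f-c)_+^q + \Xint-_{U^-}(f-c)_-^q\right)$, i.e., the infimum over $c\in\mathbb{R}$ of the sum of the average of the $q$-th power of the positive part of $f-c$ over $U^+$ and the average of the $q$-th power of the negative part of $f-c$ over $U^-$ is attained at some real number $c_0$. -/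
open MeasureTheory Set Filter
open scoped NNReal

lemma rpow_subadd {a b q : ℝ} (ha : 0 ≤ a) (hb : 0 ≤ b) (hq : 0 ≤ q) (hq1 : q ≤ 1) :
    (a + b) ^ q ≤ a ^ q + b ^ q := by
  have h := NNReal.rpow_add_le_add_rpow a.toNNReal b.toNNReal hq hq1
  calc (a + b) ^ q = ((a.toNNReal + b.toNNReal : ℝ≥0) : ℝ) ^ q := by
        rw [NNReal.coe_add, Real.coe_toNNReal a ha, Real.coe_toNNReal b hb]
    _ = (((a.toNNReal + b.toNNReal) ^ q : ℝ≥0) : ℝ) := (NNReal.coe_rpow _ _).symm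
    _ ≤ ((a.toNNReal ^ q + b.toNNReal ^ q : ℝ≥0) : ℝ) := NNReal.coe_le_coe.mpr h
    _ = a ^ q + b ^ q := by
        rw [NNReal.coe_add, NNReal.coe_rpow, NNReal.coe_rpow,
          Real.coe_toNNReal a ha, Real.coe_toNNReal b hb]

variable {α : Type*} [MeasurableSpace α]

lemma aux_meas {g : α → ℝ} (hg : Measurable g) {q : ℝ} (hq0 : 0 < q) (c : ℝ) :
    Measurable fun x => max (g x - c) 0 ^ q :=
  (Real.continuous_rpow_const hq0.le).measurable.comp
    ((hg.sub measurable_const).max measurable_const)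

lemma aux_int (ν : Measure α) [IsFiniteMeasure ν] {g : α → ℝ} (hg : Measurable g)
    {q : ℝ} (hq0 : 0 < q) (hq1 : q ≤ 1)
    (hint : Integrable (fun x => |g x| ^ q) ν) (c : ℝ) :
    Integrable (fun x => max (g x - c) 0 ^ q) ν := by
  refine (hint.add (integrable_const (|c| ^ q))).mono
    (aux_meas hg hq0 c).aestronglyMeasurable ?_
  filter_upwards with x
  have h0 : (0:ℝ) ≤ max (g x - c) 0 := le_max_right _ _
  simp only [Pi.add_apply]
  rw [Real.norm_of_nonneg (Real.rpow_nonneg h0 q),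
    Real.norm_of_nonneg (add_nonneg (Real.rpow_nonneg (abs_nonneg _) _) (Real.rpow_nonneg (abs_nonneg _) _))]
  calc max (g x - c) 0 ^ q ≤ (|g x| + |c|) ^ q := by
        refine Real.rpow_le_rpow h0 (max_le ?_ (by positivity)) hq0.le
        have := le_abs_self (g x); have := neg_le_abs c; linarith
    _ ≤ |g x| ^ q + |c| ^ q := rpow_subadd (abs_nonneg _) (abs_nonneg _) hq0.le hq1

lemma aux_cont (ν : Measure α) [IsFiniteMeasure ν] {g : α → ℝ} (hg : Measurable g)
    {q : ℝ} (hq0 : 0 < q) (hq1 : q ≤ 1)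
    (hint : Integrable (fun x => |g x| ^ q) ν) :
    Continuous fun c : ℝ => ∫ x, max (g x - c) 0 ^ q ∂ν := by
  rw [continuous_iff_continuousAt]
  intro c₀
  refine continuousAt_of_dominated (bound := fun x => |g x| ^ q + (|c₀| + 1) ^ q)
    ?_ ?_ (hint.add (integrable_const _)) ?_
  · filter_upwards with c using (aux_meas hg hq0 c).aestronglyMeasurable
  · have hball : Metric.ball c₀ 1 ∈ nhds c₀ := Metric.ball_mem_nhds c₀ one_pos
    filter_upwards [hball] with c hc
    filter_upwards with x
    have h0 : (0:ℝ) ≤ max (g x - c) 0 := le_max_right _ _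
    rw [Real.norm_of_nonneg (Real.rpow_nonneg h0 q)]
    have hcb : |c| ≤ |c₀| + 1 := by
      have := abs_sub_abs_le_abs_sub c c₀
      have h2 : |c - c₀| < 1 := by simpa [Real.dist_eq] using hc
      linarith
    calc max (g x - c) 0 ^ q ≤ (|g x| + (|c₀| + 1)) ^ q := by
          refine Real.rpow_le_rpow h0 (max_le ?_ (by positivity)) hq0.le
          have := le_abs_self (g x); have := neg_le_abs c; linarith
      _ ≤ |g x| ^ q + (|c₀| + 1) ^ q :=
          rpow_subadd (abs_nonneg _) (by positivity) hq0.le hq1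
  · filter_upwards with x
    exact ((Real.continuous_rpow_const hq0.le).comp
      ((continuous_const.sub continuous_id).max continuous_const)).continuousAt

lemma aux_coercive (ν : Measure α) [IsFiniteMeasure ν] {g : α → ℝ} (hg : Measurable g)
    {q : ℝ} (hq0 : 0 < q) (hq1 : q ≤ 1)
    (hint : Integrable (fun x => |g x| ^ q) ν) (hν : 0 < ν univ) :
    Tendsto (fun c : ℝ => ∫ x, max (g x - c) 0 ^ q ∂ν) atBot atTop := by
  obtain ⟨K, hK⟩ : ∃ K : ℕ, 0 < ν {x | -(K:ℝ) < g x} := by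
    by_contra h
    push_neg at h
    have h0 : ν (⋃ K : ℕ, {x | -(K:ℝ) < g x}) = 0 :=
      measure_iUnion_null fun K => le_antisymm (h K) zero_le
    have huniv : (⋃ K : ℕ, {x | -(K:ℝ) < g x}) = univ := by
      ext x
      simp only [mem_iUnion, mem_setOf_eq, mem_univ, iff_true]
      obtain ⟨m, hm⟩ := exists_nat_gt (-g x)
      exact ⟨m, by linarith⟩
    rw [huniv] at h0
    exact hν.ne' h0
  set S := {x | -(K:ℝ) < g x} with hS_def
  have hS : MeasurableSet S := measurableSet_lt measurable_const hg
  set r : ℝ := (ν S).toReal with hr_def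
  have hr : 0 < r := ENNReal.toReal_pos hK.ne' (measure_ne_top _ _)
  have hbase : Tendsto (fun c : ℝ => -(K:ℝ) - c) atBot atTop := by
    have := tendsto_atTop_add_const_left atBot (-(K:ℝ))
      (tendsto_neg_atBot_atTop (G := ℝ))
    simpa [sub_eq_add_neg] using this
  have htend : Tendsto (fun c : ℝ => (-(K:ℝ) - c) ^ q * r) atBot atTop :=
    ((tendsto_rpow_atTop hq0).comp hbase).atTop_mul_const hr
  refine tendsto_atTop_mono' atBot ?_ htend
  filter_upwards [eventually_le_atBot (-(K:ℝ))] with c hc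
  have hint2 : Integrable (S.indicator fun _ => (-(K:ℝ) - c) ^ q) ν :=
    (integrable_const _).indicator hS
  have hmono : ∀ x, S.indicator (fun _ => (-(K:ℝ) - c) ^ q) x ≤ max (g x - c) 0 ^ q := by
    intro x
    by_cases hx : x ∈ S
    · rw [indicator_of_mem hx]
      have hxg : -(K:ℝ) < g x := hx
      refine Real.rpow_le_rpow (by linarith) (le_max_of_le_left (by linarith)) hq0.le
    · rw [indicator_of_notMem hx]
      exact Real.rpow_nonneg (le_max_right _ _) q
  have := integral_mono hint2 (aux_int ν hg hq0 hq1 hint c) hmono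
  rw [integral_indicator_const _ hS] at this
  calc (-(K:ℝ) - c) ^ q * r = (ν S).toReal • (-(K:ℝ) - c) ^ q := by
        rw [smul_eq_mul]; ring
    _ ≤ _ := this

theorem stmt8 {n : ℕ} (Up Um : Set (Fin (n+1) → ℝ))
    (hUpm : MeasurableSet Up) (hUmm : MeasurableSet Um)
    (hUpb : Bornology.IsBounded Up) (hUmb : Bornology.IsBounded Um)
    (hUp0 : 0 < volume Up) (hUm0 : 0 < volume Um)
    (q : ℝ) (hq0 : 0 < q) (hq1 : q ≤ 1)
    (f : (Fin (n+1) → ℝ) → ℝ)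
    (hf : MemLp f (ENNReal.ofReal q) (volume.restrict (Up ∪ Um))) :
    ∃ c₀ : ℝ, ∀ c : ℝ,
      (⨍ x in Up, max (f x - c₀) 0 ^ q) + (⨍ x in Um, max (c₀ - f x) 0 ^ q) ≤
      (⨍ x in Up, max (f x - c) 0 ^ q) + (⨍ x in Um, max (c - f x) 0 ^ q) := by
  haveI hμp_fin : IsFiniteMeasure (volume.restrict Up) :=
    ⟨by rw [Measure.restrict_apply_univ]; exact hUpb.measure_lt_top⟩
  haveI hμm_fin : IsFiniteMeasure (volume.restrict Um) :=
    ⟨by rw [Measure.restrict_apply_univ]; exact hUmb.measure_lt_top⟩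
  set g := hf.1.mk f with hg_def
  have hg : Measurable g := hf.1.stronglyMeasurable_mk.measurable
  have hfg : f =ᵐ[volume.restrict (Up ∪ Um)] g := hf.1.ae_eq_mk
  have hfgp : f =ᵐ[volume.restrict Up] g :=
    hfg.filter_mono (ae_mono (Measure.restrict_mono subset_union_left le_rfl))
  have hfgm : f =ᵐ[volume.restrict Um] g :=
    hfg.filter_mono (ae_mono (Measure.restrict_mono subset_union_right le_rfl))
  have hgL : MemLp g (ENNReal.ofReal q) (volume.restrict (Up ∪ Um)) := hf.ae_eq hfg
  have hintU : Integrable (fun x => |g x| ^ q) (volume.restrict (Up ∪ Um)) := by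
    have h := hgL.integrable_norm_rpow (ENNReal.ofReal_pos.mpr hq0).ne' ENNReal.ofReal_ne_top
    simpa [ENNReal.toReal_ofReal hq0.le, Real.norm_eq_abs] using h
  have hintp : Integrable (fun x => |g x| ^ q) (volume.restrict Up) :=
    hintU.mono_measure (Measure.restrict_mono subset_union_left le_rfl)
  have hintm : Integrable (fun x => |g x| ^ q) (volume.restrict Um) :=
    hintU.mono_measure (Measure.restrict_mono subset_union_right le_rfl)
  have hintmneg : Integrable (fun x => |(-g) x| ^ q) (volume.restrict Um) := by
    simpa [abs_neg] using hintm
  have hup : 0 < (volume.restrict Up) univ := by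
    rw [Measure.restrict_apply_univ]; exact hUp0
  have hum : 0 < (volume.restrict Um) univ := by
    rw [Measure.restrict_apply_univ]; exact hUm0
  set Ip : ℝ → ℝ := fun c => ∫ x in Up, max (g x - c) 0 ^ q with hIp_def
  set ImL : ℝ → ℝ := fun c => ∫ x in Um, max (-g x - c) 0 ^ q with hImL_def
  set Im : ℝ → ℝ := fun c => ∫ x in Um, max (c - g x) 0 ^ q with hIm_def
  have hIm_eq : Im = fun c => ImL (-c) := by
    funext c
    show (∫ x in Um, max (c - g x) 0 ^ q) = ∫ x in Um, max (-g x - -c) 0 ^ q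
    exact integral_congr_ae (Filter.Eventually.of_forall fun x => by
      dsimp only; rw [show c - g x = -g x - -c from by ring])
  have hIpc : Continuous Ip := aux_cont _ hg hq0 hq1 hintp
  have hImLc : Continuous ImL := aux_cont _ hg.neg hq0 hq1 hintmneg
  have hImc : Continuous Im := by
    rw [hIm_eq]; exact hImLc.comp continuous_neg
  have hIp_t : Tendsto Ip atBot atTop := aux_coercive _ hg hq0 hq1 hintp hup
  have hImL_t : Tendsto ImL atBot atTop := aux_coercive _ hg.neg hq0 hq1 hintmneg hum
  have hIm_t : Tendsto Im atTop atTop := by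
    rw [hIm_eq]; exact hImL_t.comp tendsto_neg_atTop_atBot
  set a : ℝ := ((volume Up).toReal)⁻¹ with ha_def
  set b : ℝ := ((volume Um).toReal)⁻¹ with hb_def
  have ha : 0 < a := inv_pos.mpr (ENNReal.toReal_pos hUp0.ne' hUpb.measure_lt_top.ne)
  have hb : 0 < b := inv_pos.mpr (ENNReal.toReal_pos hUm0.ne' hUmb.measure_lt_top.ne)
  set Φ : ℝ → ℝ := fun c => a * Ip c + b * Im c with hΦ_def
  have hΦc : Continuous Φ := (continuous_const.mul hIpc).add (continuous_const.mul hImc)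
  have hIp0 : ∀ c, 0 ≤ Ip c := fun c =>
    integral_nonneg fun x => Real.rpow_nonneg (le_max_right _ _) _
  have hIm0 : ∀ c, 0 ≤ Im c := fun c =>
    integral_nonneg fun x => Real.rpow_nonneg (le_max_right _ _) _
  have hΦ_bot : Tendsto Φ atBot atTop := by
    refine tendsto_atTop_mono (fun c => ?_) (hIp_t.const_mul_atTop ha)
    have := mul_nonneg hb.le (hIm0 c)
    simp only [hΦ_def]; linarith
  have hΦ_top : Tendsto Φ atTop atTop := by
    refine tendsto_atTop_mono (fun c => ?_) (hIm_t.const_mul_atTop hb)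
    have := mul_nonneg ha.le (hIp0 c)
    simp only [hΦ_def]; linarith
  have hev : ∀ᶠ c in Filter.cocompact ℝ, Φ 0 ≤ Φ c := by
    rw [cocompact_eq_atBot_atTop, eventually_sup]
    exact ⟨hΦ_bot.eventually (eventually_ge_atTop (Φ 0)),
      hΦ_top.eventually (eventually_ge_atTop (Φ 0))⟩
  obtain ⟨c₀, hc₀⟩ := hΦc.exists_forall_le' 0 hev
  have key : ∀ c : ℝ,
      (⨍ x in Up, max (f x - c) 0 ^ q) + (⨍ x in Um, max (c - f x) 0 ^ q) = Φ c := by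
    intro c
    have e1 : (fun x => max (f x - c) 0 ^ q) =ᵐ[volume.restrict Up]
        (fun x => max (g x - c) 0 ^ q) := by
      filter_upwards [hfgp] with x hx; rw [hx]
    have e2 : (fun x => max (c - f x) 0 ^ q) =ᵐ[volume.restrict Um]
        (fun x => max (c - g x) 0 ^ q) := by
      filter_upwards [hfgm] with x hx; rw [hx]
    rw [setAverage_eq, setAverage_eq, integral_congr_ae e1, integral_congr_ae e2]
    simp only [hΦ_def, hIp_def, hIm_def, ha_def, hb_def, smul_eq_mul, Measure.real]
  exact ⟨c₀, fun c => by rw [key c₀, key c]; exact hc₀ c⟩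
end

section
/- Let $U^+,U^-\subset\mathbb{R}^{n+1}$ be measurable sets with finite positive measure and $0<q<\infty$. For measurable $f,g$ and constants $c^f,c^g\in\mathbb{R}$, the oscillation functional $\mathcal{O}(h,c)=\left(\Xint-_{U^+}(h-c)_+^q+\Xint-_{U^-}(h-c)_-^q\right)^{1/q}$ satisfies $\mathcal{O}(\max\{f,g\},\max\{c^f,c^g\})\le\max\{1,2^{\frac1q-1}\}\left(\mathcal{O}(f,c^f)+\mathcal{O}(g,c^g)\right)$, provided $f,g\in L^q(U^+\cup U^-)$. -/
open MeasureTheory Set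
open scoped NNReal

theorem key_scalar10 (a b r : ℝ) (ha : 0 ≤ a) (hb : 0 ≤ b) (hr : 0 < r) :
    (a + b) ^ r ≤ max 1 (2 ^ (r - 1)) * (a ^ r + b ^ r) := by
  rcases le_total r 1 with h1 | h1
  · have H2 := NNReal.coe_le_coe.2 (NNReal.rpow_add_le_add_rpow a.toNNReal b.toNNReal hr.le h1)
    push_cast at H2
    rw [Real.coe_toNNReal _ ha, Real.coe_toNNReal _ hb] at H2
    calc (a + b) ^ r ≤ a ^ r + b ^ r := H2
      _ ≤ max 1 (2 ^ (r-1)) * (a ^ r + b ^ r) := by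
        nth_rewrite 1 [← one_mul (a ^ r + b ^ r)]
        exact mul_le_mul_of_nonneg_right (le_max_left _ _) (by positivity)
  · have H2 := NNReal.coe_le_coe.2 (NNReal.rpow_add_le_mul_rpow_add_rpow a.toNNReal b.toNNReal h1)
    push_cast at H2
    rw [Real.coe_toNNReal _ ha, Real.coe_toNNReal _ hb] at H2
    calc (a + b) ^ r ≤ (2:ℝ) ^ (r-1) * (a ^ r + b ^ r) := H2
      _ ≤ max 1 (2 ^ (r-1)) * (a ^ r + b ^ r) :=
        mul_le_mul_of_nonneg_right (le_max_right _ _) (by positivity)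

theorem integ_aux10 {α : Type*} [MeasurableSpace α] {μ : Measure α} [IsFiniteMeasure μ]
    {q : ℝ} (hq0 : 0 < q) {f : α → ℝ}
    (hf : MemLp f (ENNReal.ofReal q) μ) (c : ℝ) :
    Integrable (fun x => max (f x - c) 0 ^ q) μ ∧
      Integrable (fun x => max (c - f x) 0 ^ q) μ := by
  have hp0 : (ENNReal.ofReal q) ≠ 0 := by simp [hq0, hq0.le]
  have h1 : MemLp (fun x => f x - c) (ENNReal.ofReal q) μ := hf.sub (memLp_const c)
  have h2 : Integrable (fun x => ‖f x - c‖ ^ q) μ := by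
    have := h1.integrable_norm_rpow hp0 (by simp)
    simpa [ENNReal.toReal_ofReal hq0.le] using this
  have hsm : AEStronglyMeasurable f μ := hf.1
  constructor
  · refine h2.mono' ((((hsm.aemeasurable.sub aemeasurable_const).max aemeasurable_const).pow aemeasurable_const).aestronglyMeasurable) ?_
    filter_upwards with x
    rw [Real.norm_eq_abs, abs_of_nonneg (Real.rpow_nonneg (le_max_right _ _) q)]
    exact Real.rpow_le_rpow (le_max_right _ _) (max_le (le_abs_self _) (abs_nonneg _)) hq0.le
  · refine h2.mono' ((((aemeasurable_const.sub hsm.aemeasurable).max aemeasurable_const).pow aemeasurable_const).aestronglyMeasurable) ?_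
    filter_upwards with x
    rw [Real.norm_eq_abs, abs_of_nonneg (Real.rpow_nonneg (le_max_right _ _) q)]
    refine Real.rpow_le_rpow (le_max_right _ _) (max_le ?_ (abs_nonneg _)) hq0.le
    rw [Real.norm_eq_abs, abs_sub_comm]; exact le_abs_self _

theorem stmt10 {n : ℕ} (Up Um : Set (Fin (n+1) → ℝ))
    (hUpm : MeasurableSet Up) (hUmm : MeasurableSet Um)
    (hUp0 : 0 < volume Up) (hUm0 : 0 < volume Um)
    (hUpfin : volume Up < ⊤) (hUmfin : volume Um < ⊤)
    (q : ℝ) (hq0 : 0 < q)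
    (f g : (Fin (n+1) → ℝ) → ℝ)
    (hf : MemLp f (ENNReal.ofReal q) (volume.restrict (Up ∪ Um)))
    (hg : MemLp g (ENNReal.ofReal q) (volume.restrict (Up ∪ Um)))
    (cf cg : ℝ) :
    ((⨍ x in Up, max (max (f x) (g x) - max cf cg) 0 ^ q) +
      (⨍ x in Um, max (max cf cg - max (f x) (g x)) 0 ^ q)) ^ q⁻¹ ≤
    max 1 (2 ^ (q⁻¹ - 1)) *
      (((⨍ x in Up, max (f x - cf) 0 ^ q) + (⨍ x in Um, max (cf - f x) 0 ^ q)) ^ q⁻¹ +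
       ((⨍ x in Up, max (g x - cg) 0 ^ q) + (⨍ x in Um, max (cg - g x) 0 ^ q)) ^ q⁻¹) := by
  have hfin : IsFiniteMeasure (volume.restrict (Up ∪ Um)) := by
    constructor
    rw [Measure.restrict_apply_univ]
    exact measure_union_lt_top hUpfin hUmfin
  have hle_p : volume.restrict Up ≤ volume.restrict (Up ∪ Um) :=
    Measure.restrict_mono subset_union_left le_rfl
  have hle_m : volume.restrict Um ≤ volume.restrict (Up ∪ Um) :=
    Measure.restrict_mono subset_union_right le_rfl
  have hIf := integ_aux10 hq0 hf cf
  have hIg := integ_aux10 hq0 hg cg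
  have hIf1 : Integrable (fun x => max (f x - cf) 0 ^ q) (volume.restrict Up) :=
    hIf.1.mono_measure hle_p
  have hIf2 : Integrable (fun x => max (cf - f x) 0 ^ q) (volume.restrict Um) :=
    hIf.2.mono_measure hle_m
  have hIg1 : Integrable (fun x => max (g x - cg) 0 ^ q) (volume.restrict Up) :=
    hIg.1.mono_measure hle_p
  have hIg2 : Integrable (fun x => max (cg - g x) 0 ^ q) (volume.restrict Um) :=
    hIg.2.mono_measure hle_m
  -- pointwise bounds
  have hptUp : ∀ x, max (max (f x) (g x) - max cf cg) 0 ^ q ≤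
      max (f x - cf) 0 ^ q + max (g x - cg) 0 ^ q := by
    intro x
    have h1 : max (max (f x) (g x) - max cf cg) 0 ≤
        max (max (f x - cf) 0) (max (g x - cg) 0) := by
      refine max_le ?_ (le_trans (le_max_right _ _) (le_max_right _ _))
      rcases le_total (f x) (g x) with h | h
      · rw [max_eq_right h]
        exact le_trans (le_trans (sub_le_sub_left (le_max_right cf cg) _)
          (le_max_left _ _)) (le_max_right _ _)
      · rw [max_eq_left h]
        exact le_trans (le_trans (sub_le_sub_left (le_max_left cf cg) _)
          (le_max_left _ _)) (le_max_left _ _)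
    calc max (max (f x) (g x) - max cf cg) 0 ^ q
        ≤ max (max (f x - cf) 0) (max (g x - cg) 0) ^ q :=
          Real.rpow_le_rpow (le_max_right _ _) h1 hq0.le
      _ ≤ max (f x - cf) 0 ^ q + max (g x - cg) 0 ^ q := by
          rcases le_total (max (f x - cf) 0) (max (g x - cg) 0) with h | h
          · rw [max_eq_right h]
            exact le_add_of_nonneg_left (Real.rpow_nonneg (le_max_right _ _) q)
          · rw [max_eq_left h]
            exact le_add_of_nonneg_right (Real.rpow_nonneg (le_max_right _ _) q)
  have hptUm : ∀ x, max (max cf cg - max (f x) (g x)) 0 ^ q ≤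
      max (cf - f x) 0 ^ q + max (cg - g x) 0 ^ q := by
    intro x
    have h1 : max (max cf cg - max (f x) (g x)) 0 ≤
        max (max (cf - f x) 0) (max (cg - g x) 0) := by
      refine max_le ?_ (le_trans (le_max_right _ _) (le_max_right _ _))
      rcases le_total cf cg with h | h
      · rw [max_eq_right h]
        exact le_trans (le_trans (sub_le_sub_left (le_max_right (f x) (g x)) _)
          (le_max_left _ _)) (le_max_right _ _)
      · rw [max_eq_left h]
        exact le_trans (le_trans (sub_le_sub_left (le_max_left (f x) (g x)) _)
          (le_max_left _ _)) (le_max_left _ _)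
    calc max (max cf cg - max (f x) (g x)) 0 ^ q
        ≤ max (max (cf - f x) 0) (max (cg - g x) 0) ^ q :=
          Real.rpow_le_rpow (le_max_right _ _) h1 hq0.le
      _ ≤ max (cf - f x) 0 ^ q + max (cg - g x) 0 ^ q := by
          rcases le_total (max (cf - f x) 0) (max (cg - g x) 0) with h | h
          · rw [max_eq_right h]
            exact le_add_of_nonneg_left (Real.rpow_nonneg (le_max_right _ _) q)
          · rw [max_eq_left h]
            exact le_add_of_nonneg_right (Real.rpow_nonneg (le_max_right _ _) q)
  -- average bounds
  have keyUp : (⨍ x in Up, max (max (f x) (g x) - max cf cg) 0 ^ q) ≤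
      (⨍ x in Up, max (f x - cf) 0 ^ q) + (⨍ x in Up, max (g x - cg) 0 ^ q) := by
    rw [setAverage_eq, setAverage_eq, setAverage_eq, ← smul_add, smul_eq_mul, smul_eq_mul]
    refine mul_le_mul_of_nonneg_left ?_ (by positivity)
    rw [← integral_add hIf1 hIg1]
    refine integral_mono_of_nonneg ?_ (hIf1.add hIg1) ?_
    · filter_upwards with x using Real.rpow_nonneg (le_max_right _ _) q
    · filter_upwards with x using hptUp x
  have keyUm : (⨍ x in Um, max (max cf cg - max (f x) (g x)) 0 ^ q) ≤
      (⨍ x in Um, max (cf - f x) 0 ^ q) + (⨍ x in Um, max (cg - g x) 0 ^ q) := by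
    rw [setAverage_eq, setAverage_eq, setAverage_eq, ← smul_add, smul_eq_mul, smul_eq_mul]
    refine mul_le_mul_of_nonneg_left ?_ (by positivity)
    rw [← integral_add hIf2 hIg2]
    refine integral_mono_of_nonneg ?_ (hIf2.add hIg2) ?_
    · filter_upwards with x using Real.rpow_nonneg (le_max_right _ _) q
    · filter_upwards with x using hptUm x
  -- nonnegativity of averages
  have havg_nonneg : ∀ (s : Set (Fin (n+1) → ℝ)) (F : (Fin (n+1) → ℝ) → ℝ),
      (∀ x, 0 ≤ F x) → 0 ≤ ⨍ x in s, F x := by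
    intro s F hF
    rw [setAverage_eq, smul_eq_mul]
    exact mul_nonneg (by positivity) (integral_nonneg hF)
  set Af := (⨍ x in Up, max (f x - cf) 0 ^ q) + (⨍ x in Um, max (cf - f x) 0 ^ q) with hAf
  set Ag := (⨍ x in Up, max (g x - cg) 0 ^ q) + (⨍ x in Um, max (cg - g x) 0 ^ q) with hAg
  have hAf0 : 0 ≤ Af := add_nonneg
    (havg_nonneg _ _ fun x => Real.rpow_nonneg (le_max_right _ _) q)
    (havg_nonneg _ _ fun x => Real.rpow_nonneg (le_max_right _ _) q)
  have hAg0 : 0 ≤ Ag := add_nonneg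
    (havg_nonneg _ _ fun x => Real.rpow_nonneg (le_max_right _ _) q)
    (havg_nonneg _ _ fun x => Real.rpow_nonneg (le_max_right _ _) q)
  have hP0 : 0 ≤ (⨍ x in Up, max (max (f x) (g x) - max cf cg) 0 ^ q) +
      (⨍ x in Um, max (max cf cg - max (f x) (g x)) 0 ^ q) := add_nonneg
    (havg_nonneg _ _ fun x => Real.rpow_nonneg (le_max_right _ _) q)
    (havg_nonneg _ _ fun x => Real.rpow_nonneg (le_max_right _ _) q)
  have hPle : (⨍ x in Up, max (max (f x) (g x) - max cf cg) 0 ^ q) +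
      (⨍ x in Um, max (max cf cg - max (f x) (g x)) 0 ^ q) ≤ Af + Ag := by
    calc _ ≤ ((⨍ x in Up, max (f x - cf) 0 ^ q) + (⨍ x in Up, max (g x - cg) 0 ^ q)) +
        ((⨍ x in Um, max (cf - f x) 0 ^ q) + (⨍ x in Um, max (cg - g x) 0 ^ q)) :=
          add_le_add keyUp keyUm
      _ = Af + Ag := by rw [hAf, hAg]; ring
  calc ((⨍ x in Up, max (max (f x) (g x) - max cf cg) 0 ^ q) +
      (⨍ x in Um, max (max cf cg - max (f x) (g x)) 0 ^ q)) ^ q⁻¹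
      ≤ (Af + Ag) ^ q⁻¹ := Real.rpow_le_rpow hP0 hPle (inv_nonneg.2 hq0.le)
    _ ≤ max 1 (2 ^ (q⁻¹ - 1)) * (Af ^ q⁻¹ + Ag ^ q⁻¹) :=
        key_scalar10 Af Ag q⁻¹ hAf0 hAg0 (inv_pos.2 hq0)
end
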